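/- Lyapunov functional: let φ : ℝ → ℝ be continuous, V(s) = ∫₀^s φ(τ) dτ, and L(w) = Σ_{i=0}^{N} V(w_i) for w : {0,…,N} → ℝ. If u : I → ℝ^{N+1} solves the grid system u'(t) = Δ_N(φ∘u(t)) on an interval I, then for every t ∈ I the function t ↦ L(u(t)) is differentiable with d/dt L(u(t)) = −(1/ε²) Σ_{i=0}^{N−1} ( φ(u_{i+1}(t)) − φ(u_i(t)) )² ≤ 0; in particular L is nonincreasing along every solution. -/

import Mathlib

/-- The discrete Neumann Laplacian on `{0,…,N}` with mesh `ε = 1/N`: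
`(Δ_N w)_i = (w_{i+1} − 2w_i + w_{i−1})/ε²` for `0 < i < N`,
`(Δ_N w)_0 = (w_1 − w_0)/ε²`, `(Δ_N w)_N = (w_{N−1} − w_N)/ε²`. -/
noncomputable def lapN (N : ℕ) (w : Fin (N + 1) → ℝ) (i : Fin (N + 1)) : ℝ :=
  if i.val = 0 then
    (N : ℝ) ^ 2 * (w ⟨min 1 N, by omega⟩ - w ⟨0, by omega⟩)
  else if h : i.val = N then
    (N : ℝ) ^ 2 * (w ⟨N - 1, by omega⟩ - w ⟨N, by omega⟩)
  else
    (N : ℝ) ^ 2 *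
      (w ⟨i.val + 1, by have := i.isLt; omega⟩ - 2 * w i + w ⟨i.val - 1, by omega⟩)

/-- `L(w) = Σᵢ V(wᵢ)` with `V(s) = ∫₀^s φ(τ) dτ` is a Lyapunov
functional for the grid system: along every solution,
`d/dt L(u(t)) = −(1/ε²) Σ_{i=0}^{N−1} (φ(u_{i+1}(t)) − φ(uᵢ(t)))² ≤ 0`,
and `L` is nonincreasing along the solution. -/
lemma key_nat (N : ℕ) (hN : 1 ≤ N) (b : ℕ → ℝ) :
    (∑ i ∈ Finset.range (N+1), b i *
      (if i = 0 then (N:ℝ)^2*(b 1 - b 0) else if i = N then (N:ℝ)^2*(b (N-1) - b N)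
        else (N:ℝ)^2*(b (i+1) - 2*b i + b (i-1))))
    = -(N:ℝ)^2 * ∑ i ∈ Finset.range N, (b (i+1) - b i)^2 := by
  set g : ℕ → ℝ := fun i => if i < N then b (i+1) - b i else 0 with hg
  have step : ∀ i ∈ Finset.range (N+1), b i *
      (if i = 0 then (N:ℝ)^2*(b 1 - b 0) else if i = N then (N:ℝ)^2*(b (N-1) - b N)
        else (N:ℝ)^2*(b (i+1) - 2*b i + b (i-1)))
      = (N:ℝ)^2 * (b i * g i - b i * (if i = 0 then 0 else g (i-1))) := by
    intro i hi
    simp only [Finset.mem_range] at hi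
    rcases Nat.eq_zero_or_pos i with h0 | h0
    · subst h0
      simp [hg, hN, Nat.lt_of_lt_of_le Nat.one_pos hN]
      ring
    · rcases eq_or_ne i N with hiN | hiN
      · have h1 : ¬ (i = 0) := by omega
        have h2 : ¬ (N < N) := by omega
        have h3 : N - 1 < N := by omega
        have h4 : N - 1 + 1 = N := by omega
        have h5 : ¬ (N = 0) := by omega
        simp [hg, hiN, h1, h2, h3, h4, h5]
        ring
      · have h1 : ¬ (i = 0) := by omega
        have h2 : i < N := by omega
        have h3 : i - 1 < N := by omega
        have h4 : i - 1 + 1 = i := by omega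
        simp [hg, h1, hiN, h2, h3, h4]
        ring
  rw [Finset.sum_congr rfl step]
  have e1 : ∑ i ∈ Finset.range (N+1), (N:ℝ)^2 * (b i * g i - b i * (if i = 0 then 0 else g (i-1)))
      = (N:ℝ)^2 * ((∑ i ∈ Finset.range (N+1), b i * g i)
        - ∑ i ∈ Finset.range (N+1), b i * (if i = 0 then 0 else g (i-1))) := by
    rw [← Finset.mul_sum, Finset.sum_sub_distrib]
  rw [e1]
  have e2 : ∑ i ∈ Finset.range (N+1), b i * g i = ∑ i ∈ Finset.range N, b i * g i := by
    rw [Finset.sum_range_succ]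
    simp [hg]
  have e3 : ∑ i ∈ Finset.range (N+1), b i * (if i = 0 then 0 else g (i-1))
      = ∑ i ∈ Finset.range N, b (i+1) * g i := by
    rw [Finset.sum_range_succ']
    simp
  rw [e2, e3, ← Finset.sum_sub_distrib]
  have e4 : ∀ i ∈ Finset.range N, b i * g i - b (i+1) * g i = -((b (i+1) - b i)^2) := by
    intro i hi
    simp only [Finset.mem_range] at hi
    simp [hg, hi]
    ring
  rw [Finset.sum_congr rfl e4, Finset.sum_neg_distrib]
  ring

lemma key_fin (N : ℕ) (hN : 1 ≤ N) (a : Fin (N+1) → ℝ) :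
    ∑ i : Fin (N+1), a i * lapN N a i
      = -(N:ℝ)^2 * ∑ i : Fin N, (a i.succ - a i.castSucc)^2 := by
  classical
  set b : ℕ → ℝ := fun i => if h : i < N + 1 then a ⟨i, h⟩ else 0 with hbdef
  have hb : ∀ (i : ℕ) (h : i < N+1), a ⟨i, h⟩ = b i := by
    intro i h; rw [hbdef]; simp only [dif_pos h]
  have hmin : min 1 N = 1 := min_eq_left hN
  have hL : ∀ i : Fin (N+1), a i * lapN N a i = b i.val *
      (if i.val = 0 then (N:ℝ)^2*(b 1 - b 0) else if i.val = N then (N:ℝ)^2*(b (N-1) - b N)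
        else (N:ℝ)^2*(b (i.val+1) - 2*b i.val + b (i.val-1))) := by
    intro i
    have hai : a i = b i.val := by
      rw [← hb i.val i.isLt]
    simp only [lapN, hmin]
    split_ifs with h1 h2
    · rw [hai, hb 1 (by omega), hb 0 (by omega)]
    · rw [hai, hb (N-1) (by omega), hb N (by omega)]
    · rw [hai, hb (i.val+1) (by have := i.isLt; omega), hb (i.val-1) (by omega)]
  have hR : ∀ i : Fin N, (a i.succ - a i.castSucc)^2 = (b (i.val+1) - b i.val)^2 := by
    intro i
    have h1 : a i.succ = b (i.val+1) := by
      rw [show i.succ = (⟨i.val+1, by omega⟩ : Fin (N+1)) from rfl, hb]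
    have h2 : a i.castSucc = b i.val := by
      rw [show i.castSucc = (⟨i.val, by omega⟩ : Fin (N+1)) from rfl, hb]
    rw [h1, h2]
  rw [Finset.sum_congr rfl (fun i _ => hL i), Finset.sum_congr rfl (fun i _ => hR i)]
  rw [Fin.sum_univ_eq_sum_range (fun i => b i *
      (if i = 0 then (N:ℝ)^2*(b 1 - b 0) else if i = N then (N:ℝ)^2*(b (N-1) - b N)
        else (N:ℝ)^2*(b (i+1) - 2*b i + b (i-1)))),
    Fin.sum_univ_eq_sum_range (fun i => (b (i+1) - b i)^2)]
  exact key_nat N hN b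

theorem stmt10 (φ : ℝ → ℝ) (hφ : Continuous φ) (N : ℕ) (hN : 1 ≤ N)
    (I : Set ℝ) (hI : I.OrdConnected) (u : ℝ → Fin (N + 1) → ℝ)
    (hu : ∀ t ∈ I, HasDerivWithinAt u (lapN N fun j => φ (u t j)) I t) :
    (∀ t ∈ I,
      HasDerivWithinAt (fun s => ∑ i, ∫ τ in (0 : ℝ)..(u s i), φ τ)
        (-(N : ℝ) ^ 2 * ∑ i : Fin N, (φ (u t i.succ) - φ (u t i.castSucc)) ^ 2)
        I t ∧
      -(N : ℝ) ^ 2 * ∑ i : Fin N, (φ (u t i.succ) - φ (u t i.castSucc)) ^ 2 ≤ 0) ∧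
    ∀ t₁ ∈ I, ∀ t₂ ∈ I, t₁ ≤ t₂ →
      (∑ i, ∫ τ in (0 : ℝ)..(u t₂ i), φ τ) ≤ ∑ i, ∫ τ in (0 : ℝ)..(u t₁ i), φ τ := by
  -- derivative of V at any point
  have hV : ∀ y : ℝ, HasDerivAt (fun s => ∫ τ in (0:ℝ)..s, φ τ) (φ y) y := by
    intro y
    exact (hφ.integral_hasStrictDerivAt 0 y).hasDerivAt
  have main : ∀ t ∈ I,
      HasDerivWithinAt (fun s => ∑ i, ∫ τ in (0 : ℝ)..(u s i), φ τ)
        (-(N : ℝ) ^ 2 * ∑ i : Fin N, (φ (u t i.succ) - φ (u t i.castSucc)) ^ 2) I t := by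
    intro t ht
    have hcoord : ∀ i : Fin (N+1),
        HasDerivWithinAt (fun s => u s i) (lapN N (fun j => φ (u t j)) i) I t :=
      (hasDerivWithinAt_pi.mp (hu t ht))
    have hterm : ∀ i : Fin (N+1),
        HasDerivWithinAt (fun s => ∫ τ in (0:ℝ)..(u s i), φ τ)
          (φ (u t i) * lapN N (fun j => φ (u t j)) i) I t := by
      intro i
      exact (hV (u t i)).comp_hasDerivWithinAt t (hcoord i)
    have hsum := HasDerivWithinAt.fun_sum (fun i (_ : i ∈ Finset.univ) => hterm i)
    have heq : ∑ i : Fin (N+1), φ (u t i) * lapN N (fun j => φ (u t j)) i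
        = -(N : ℝ) ^ 2 * ∑ i : Fin N, (φ (u t i.succ) - φ (u t i.castSucc)) ^ 2 :=
      key_fin N hN (fun j => φ (u t j))
    rw [heq] at hsum
    exact hsum
  have hnonpos : ∀ t : ℝ,
      -(N : ℝ) ^ 2 * ∑ i : Fin N, (φ (u t i.succ) - φ (u t i.castSucc)) ^ 2 ≤ 0 := by
    intro t
    apply mul_nonpos_of_nonpos_of_nonneg
    · simp [sq_nonneg]
    · exact Finset.sum_nonneg fun i _ => sq_nonneg _
  refine ⟨fun t ht => ⟨main t ht, hnonpos t⟩, ?_⟩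
  intro t₁ ht₁ t₂ ht₂ h12
  have hconv : Convex ℝ I := convex_iff_ordConnected.mpr hI
  have hanti : AntitoneOn (fun s => ∑ i, ∫ τ in (0 : ℝ)..(u s i), φ τ) I := by
    apply antitoneOn_of_hasDerivWithinAt_nonpos hconv
      (f' := fun t => -(N : ℝ) ^ 2 * ∑ i : Fin N, (φ (u t i.succ) - φ (u t i.castSucc)) ^ 2)
    · exact fun t ht => (main t ht).continuousWithinAt
    · exact fun t ht => ((main t (interior_subset ht)).mono interior_subset)
    · exact fun t _ => hnonpos t
  exact hanti ht₁ ht₂ h12
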